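/- arXiv:1311.4178 — 3 statements merged into one kernel-verified Lean document; each statement's English description precedes it below -/
import Mathlib

section
/- Let Ω ⊂ ℝ² be a bounded domain, f ∈ L²(Ω), and B(p,Q) a bounded function on Ω×Ω. Define v(p) = ∫∫_Ω B(p,Q)/|p−Q| f(Q) dQ. Then there exists a constant C depending only on Ω and the bound of B such that for every measurable set D ⊂ Ω and every ε ∈ (0,1), ∫∫_D v(p)² dp ≤ (C/ε) |D|^{1−ε} ‖f‖²_{L²(Ω)}, where |D| denotes the Lebesgue measure of D. -/
open MeasureTheory Set Metric
open scoped ENNReal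
noncomputable section

local notation "E2" => EuclideanSpace ℝ (Fin 2)

lemma aux_geom {s : ℝ} (h0 : 0 < s) (h2 : s ≤ 2) : s / 6 ≤ 1 - (2:ℝ) ^ (-s) := by
  have hln1 : (1/2 : ℝ) ≤ Real.log 2 := by
    have := Real.log_two_gt_d9; linarith
  have hln2 : Real.log 2 ≤ 1 := by
    have := Real.log_two_lt_d9; linarith
  have h1 : (2:ℝ) ^ (-s) = Real.exp (-(s * Real.log 2)) := by
    rw [Real.rpow_def_of_pos two_pos]; ring_nf
  set u := s * Real.log 2 with hu
  have hu0 : 0 < u := by positivity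
  have hexp : Real.exp (-u) ≤ 1 / (1 + u) := by
    rw [Real.exp_neg, one_div]
    exact inv_anti₀ (by linarith) (by linarith [Real.add_one_le_exp u])
  have hu1 : s / 2 ≤ u := by nlinarith
  have hu2 : u ≤ 2 := by nlinarith
  have h3 : s/6 ≤ u/(1+u) := by
    rw [div_le_div_iff₀ (by norm_num) (by linarith)]; nlinarith
  have h4 : u/(1+u) = 1 - 1/(1+u) := by field_simp; ring
  rw [h1]; linarith

lemma estC {a r : ℝ} (ha : 0 < a) (ha2 : a < 2) (hr : 0 < r) (x : E2) :
    ∫⁻ p in ball x r, (edist p x) ^ (-a) ≤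
      ENNReal.ofReal (24 * (volume (ball (0:E2) 1)).toReal * r ^ (2-a) / (2-a)) := by
  classical
  set κ : ℝ≥0∞ := volume (ball (0:E2) 1) with hκ
  have hκfin : κ ≠ ⊤ := measure_ball_lt_top.ne
  have hκ0 : 0 < κ := measure_ball_pos _ _ one_pos
  set kr : ℝ := κ.toReal with hkr
  have hkr0 : 0 < kr := ENNReal.toReal_pos hκ0.ne' hκfin
  set s : ℝ := 2 - a with hs
  have hs0 : 0 < s := by simp only [hs]; linarith
  have hs2 : s ≤ 2 := by simp only [hs]; linarith
  set g : E2 → ℝ≥0∞ := fun p => (edist p x) ^ (-a) with hg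
  set A : ℕ → Set E2 := fun n => {p | r / 2^(n+1) ≤ dist p x ∧ dist p x < r / 2^n} with hA
  -- covering
  have hcover : ball x r \ {x} ⊆ ⋃ n, A n := by
    rintro p ⟨hpb, hpx⟩
    have hd0 : 0 < dist p x := dist_pos.2 (by simpa using hpx)
    have hdr : dist p x < r := mem_ball.1 hpb
    obtain ⟨m, hm⟩ : ∃ m : ℕ, r / dist p x < 2 ^ m := pow_unbounded_of_one_lt _ one_lt_two
    have hPm : r / 2 ^ (m+1) ≤ dist p x := by
      rw [div_le_iff₀ (by positivity)]
      rw [div_lt_iff₀ hd0] at hm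
      calc r ≤ 2^m * dist p x := hm.le
        _ ≤ dist p x * 2^(m+1) := by
            rw [mul_comm]; gcongr <;> [skip; omega]; norm_num
    set P : ℕ → Prop := fun n => r / 2 ^ (n+1) ≤ dist p x with hP
    have hex : ∃ n, P n := ⟨m, hPm⟩
    refine mem_iUnion.2 ⟨Nat.find hex, Nat.find_spec hex, ?_⟩
    rcases Nat.eq_zero_or_pos (Nat.find hex) with h0 | h0
    · rw [h0]; simpa using hdr
    · have := Nat.find_min hex (Nat.sub_lt h0 one_pos)
      simp only [hP, not_le] at this
      have he : Nat.find hex - 1 + 1 = Nat.find hex := by omega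
      rwa [he] at this
  -- reduce to the union
  have step0 : ∫⁻ p in ball x r, g p ≤ ∑' n, ∫⁻ p in A n, g p := by
    calc ∫⁻ p in ball x r, g p ≤ ∫⁻ p in (ball x r \ {x}) ∪ {x}, g p :=
          lintegral_mono_set (by intro p hp; by_cases h : p = x <;> simp [h, hp])
      _ ≤ (∫⁻ p in ball x r \ {x}, g p) + ∫⁻ p in {x}, g p := lintegral_union_le _ _ _
      _ = ∫⁻ p in ball x r \ {x}, g p := by
          rw [Measure.restrict_eq_zero.2 (measure_singleton x), lintegral_zero_measure, add_zero]
      _ ≤ ∫⁻ p in ⋃ n, A n, g p := lintegral_mono_set hcover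
      _ ≤ ∑' n, ∫⁻ p in A n, g p := lintegral_iUnion_le _ _
  -- term bound
  have hterm : ∀ n : ℕ, ∫⁻ p in A n, g p ≤
      ENNReal.ofReal ((r / 2^(n+1)) ^ (-a) * (r / 2^n)^2) * κ := by
    intro n
    have hc0 : (0:ℝ) < r / 2^(n+1) := by positivity
    have hptw : ∀ p ∈ A n, g p ≤ ENNReal.ofReal ((r / 2^(n+1)) ^ (-a)) := by
      intro p hp
      have hb : ENNReal.ofReal (r / 2^(n+1)) ≤ edist p x := by
        rw [edist_dist]; exact ENNReal.ofReal_le_ofReal hp.1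
      calc g p = ((edist p x) ^ a)⁻¹ := by rw [hg]; simp [ENNReal.rpow_neg]
        _ ≤ ((ENNReal.ofReal (r / 2^(n+1))) ^ a)⁻¹ :=
            ENNReal.inv_le_inv' (ENNReal.rpow_le_rpow hb ha.le)
        _ = (ENNReal.ofReal ((r / 2^(n+1)) ^ a))⁻¹ := by
            rw [ENNReal.ofReal_rpow_of_pos hc0]
        _ = ENNReal.ofReal ((r / 2^(n+1)) ^ a)⁻¹ := by
            rw [ENNReal.ofReal_inv_of_pos (Real.rpow_pos_of_pos hc0 a)]
        _ = ENNReal.ofReal ((r / 2^(n+1)) ^ (-a)) := by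
            rw [Real.rpow_neg hc0.le]
    have hAn : A n ⊆ ball x (r / 2^n) := fun p hp => mem_ball.2 hp.2
    have hvol : volume (A n) ≤ ENNReal.ofReal ((r / 2^n)^2) * κ := by
      calc volume (A n) ≤ volume (ball x (r / 2^n)) := measure_mono hAn
        _ = ENNReal.ofReal ((r / 2^n) ^ Module.finrank ℝ E2) * κ :=
            Measure.addHaar_ball _ _ (by positivity)
        _ = ENNReal.ofReal ((r / 2^n)^2) * κ := by
            congr 2
            simp [finrank_euclideanSpace]
    calc ∫⁻ p in A n, g p ≤ ∫⁻ _ in A n, ENNReal.ofReal ((r / 2^(n+1)) ^ (-a)) :=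
          setLIntegral_mono' (by
            apply MeasurableSet.inter
            · exact measurableSet_le measurable_const (measurable_id.dist measurable_const)
            · exact measurableSet_lt (measurable_id.dist measurable_const) measurable_const) hptw
      _ = ENNReal.ofReal ((r / 2^(n+1)) ^ (-a)) * volume (A n) := setLIntegral_const _ _
      _ ≤ ENNReal.ofReal ((r / 2^(n+1)) ^ (-a)) * (ENNReal.ofReal ((r / 2^n)^2) * κ) := by
          gcongr
      _ = ENNReal.ofReal ((r / 2^(n+1)) ^ (-a) * (r / 2^n)^2) * κ := by
          rw [← mul_assoc, ← ENNReal.ofReal_mul (by positivity)]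
  -- scalar identity
  set w : ℝ := (2:ℝ) ^ (-s) with hw
  have hw0 : 0 ≤ w := le_of_lt (Real.rpow_pos_of_pos two_pos _)
  set L := Real.log r with hL
  set T := Real.log 2 with hT
  have hscal : ∀ n : ℕ, (r / 2^(n+1)) ^ (-a) * (r / 2^n)^2 = (r ^ s * 2 ^ a) * w ^ n := by
    intro n
    have hp1 : (0:ℝ) < r/2^(n+1) := by positivity
    have hp2 : (0:ℝ) < r/2^n := by positivity
    have l1 : Real.log (r/2^(n+1)) = L - (n+1)*T := by
      rw [Real.log_div hr.ne' (by positivity), Real.log_pow]; push_cast; try ring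
    have l2 : Real.log (r/2^n) = L - n*T := by
      rw [Real.log_div hr.ne' (by positivity), Real.log_pow]
    have e2 : (r/2^n)^2 = Real.exp ((L - n*T)*2) := by
      have h := Real.exp_log hp2
      rw [l2] at h
      rw [← h, ← Real.exp_nat_mul]
      congr 1
      push_cast
      ring
    have e3 : w ^ n = Real.exp (n * (T * (-s))) := by
      rw [hw, Real.rpow_def_of_pos two_pos, ← Real.exp_nat_mul]
    rw [Real.rpow_def_of_pos hp1, l1, e2, e3, Real.rpow_def_of_pos hr,
      Real.rpow_def_of_pos two_pos, ← Real.exp_add, ← Real.exp_add, ← Real.exp_add]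
    congr 1
    simp only [hs]
    push_cast
    ring
  -- sum the series
  have hsum : ∑' n, ∫⁻ p in A n, g p ≤
      ENNReal.ofReal (r ^ s * 2 ^ a) * (1 - ENNReal.ofReal w)⁻¹ * κ := by
    calc ∑' n, ∫⁻ p in A n, g p
        ≤ ∑' n, ENNReal.ofReal ((r / 2^(n+1)) ^ (-a) * (r / 2^n)^2) * κ :=
          ENNReal.tsum_le_tsum hterm
      _ = ∑' n, (ENNReal.ofReal (r ^ s * 2 ^ a) * (ENNReal.ofReal w) ^ n) * κ := by
          congr 1; funext n
          rw [hscal n, ENNReal.ofReal_mul (by positivity), ENNReal.ofReal_pow hw0]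
      _ = ENNReal.ofReal (r ^ s * 2 ^ a) * (∑' n, (ENNReal.ofReal w) ^ n) * κ := by
          rw [ENNReal.tsum_mul_right, ENNReal.tsum_mul_left]
      _ = ENNReal.ofReal (r ^ s * 2 ^ a) * (1 - ENNReal.ofReal w)⁻¹ * κ := by
          rw [ENNReal.tsum_geometric]
  have hgeo : (1 - ENNReal.ofReal w)⁻¹ ≤ ENNReal.ofReal (6/s) := by
    have h1 : ENNReal.ofReal (s/6) ≤ 1 - ENNReal.ofReal w := by
      rw [← ENNReal.ofReal_one, ← ENNReal.ofReal_sub _ hw0]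
      exact ENNReal.ofReal_le_ofReal (aux_geom hs0 hs2)
    calc (1 - ENNReal.ofReal w)⁻¹ ≤ (ENNReal.ofReal (s/6))⁻¹ := ENNReal.inv_le_inv' h1
      _ = ENNReal.ofReal ((s/6)⁻¹) := (ENNReal.ofReal_inv_of_pos (by positivity)).symm
      _ = ENNReal.ofReal (6/s) := by rw [inv_div]
  have h2a4 : (2:ℝ) ^ a ≤ 4 := by
    have h1 : (2:ℝ) ^ a ≤ (2:ℝ) ^ (2:ℝ) := Real.rpow_le_rpow_of_exponent_le one_le_two ha2.le
    have h2 : (2:ℝ) ^ (2:ℝ) = 4 := by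
      rw [Real.rpow_two]; norm_num
    linarith
  have hfin : ENNReal.ofReal (r ^ s * 2 ^ a) * ENNReal.ofReal (6/s) * κ ≤
      ENNReal.ofReal (24 * kr * r ^ s / s) := by
    rw [show κ = ENNReal.ofReal kr from (ENNReal.ofReal_toReal hκfin).symm,
      ← ENNReal.ofReal_mul (by positivity), ← ENNReal.ofReal_mul (by positivity)]
    apply ENNReal.ofReal_le_ofReal
    have hrs : (0:ℝ) < r ^ s := Real.rpow_pos_of_pos hr _
    have : 24 * kr * r ^ s / s = r ^ s * 4 * (6/s) * kr := by field_simp; ring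
    rw [this]
    gcongr
  calc ∫⁻ p in ball x r, g p ≤ ∑' n, ∫⁻ p in A n, g p := step0
    _ ≤ ENNReal.ofReal (r ^ s * 2 ^ a) * (1 - ENNReal.ofReal w)⁻¹ * κ := hsum
    _ ≤ ENNReal.ofReal (r ^ s * 2 ^ a) * ENNReal.ofReal (6/s) * κ := by gcongr
    _ ≤ ENNReal.ofReal (24 * kr * r ^ s / s) := hfin


lemma rpow_edist_le {a c : ℝ} (ha : 0 < a) (hc : 0 < c) {p x : E2} (h : c ≤ dist p x) :
    (edist p x) ^ (-a) ≤ ENNReal.ofReal (c ^ (-a)) := by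
  have hb : ENNReal.ofReal c ≤ edist p x := by
    rw [edist_dist]; exact ENNReal.ofReal_le_ofReal h
  calc (edist p x) ^ (-a) = ((edist p x) ^ a)⁻¹ := by simp [ENNReal.rpow_neg]
    _ ≤ ((ENNReal.ofReal c) ^ a)⁻¹ := ENNReal.inv_le_inv' (ENNReal.rpow_le_rpow hb ha.le)
    _ = (ENNReal.ofReal (c ^ a))⁻¹ := by rw [ENNReal.ofReal_rpow_of_pos hc]
    _ = ENNReal.ofReal ((c ^ a)⁻¹) := by
        rw [ENNReal.ofReal_inv_of_pos (Real.rpow_pos_of_pos hc a)]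
    _ = ENNReal.ofReal (c ^ (-a)) := by rw [Real.rpow_neg hc.le]

lemma estA {ε d : ℝ} (hε : ε ∈ Set.Ioc (0:ℝ) (1/2)) (hd : 0 < d) {Ω : Set E2} {p : E2}
    (hsub : Ω ⊆ ball p d) :
    ∫⁻ Q in Ω, (edist p Q) ^ (-(2-2*ε)) ≤
      ENNReal.ofReal (24 * (volume (ball (0:E2) 1)).toReal * d ^ (2*ε) / (2*ε)) := by
  obtain ⟨hε0, hε12⟩ := hε
  have ha : (0:ℝ) < 2-2*ε := by linarith
  have ha2 : (2:ℝ)-2*ε < 2 := by linarith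
  calc ∫⁻ Q in Ω, (edist p Q) ^ (-(2-2*ε))
      ≤ ∫⁻ Q in ball p d, (edist p Q) ^ (-(2-2*ε)) := lintegral_mono_set hsub
    _ = ∫⁻ Q in ball p d, (edist Q p) ^ (-(2-2*ε)) := by
        apply lintegral_congr; intro Q; rw [edist_comm]
    _ ≤ ENNReal.ofReal (24 * (volume (ball (0:E2) 1)).toReal * d ^ (2-(2-2*ε)) / (2-(2-2*ε))) :=
        estC ha ha2 hd p
    _ = ENNReal.ofReal (24 * (volume (ball (0:E2) 1)).toReal * d ^ (2*ε) / (2*ε)) := by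
        norm_num

lemma estB {ε : ℝ} (hε : ε ∈ Set.Ioc (0:ℝ) (1/2)) {D : Set E2} (hDm : MeasurableSet D)
    (hDfin : volume D ≠ ⊤) (Q : E2) :
    ∫⁻ p in D, (edist p Q) ^ (-(2*ε)) ≤
      ENNReal.ofReal ((24 * (volume (ball (0:E2) 1)).toReal + 1) *
        (volume D).toReal ^ (1-ε)) := by
  obtain ⟨hε0, hε12⟩ := hε
  set kr : ℝ := (volume (ball (0:E2) 1)).toReal with hkr
  have hkr0 : 0 ≤ kr := ENNReal.toReal_nonneg
  by_cases hm : volume D = 0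
  · rw [Measure.restrict_eq_zero.2 hm, lintegral_zero_measure]; exact zero_le
  set m : ℝ := (volume D).toReal with hmdef
  have hm0 : 0 < m := ENNReal.toReal_pos hm hDfin
  set ρ : ℝ := m ^ (1/2 : ℝ) with hρ
  have hρ0 : 0 < ρ := Real.rpow_pos_of_pos hm0 _
  have ha : (0:ℝ) < 2*ε := by linarith
  have ha2 : 2*ε < 2 := by linarith
  -- ball part
  have hball : ∫⁻ p in ball Q ρ, (edist p Q) ^ (-(2*ε)) ≤
      ENNReal.ofReal (24 * kr * m ^ (1-ε)) := by
    refine (estC ha ha2 hρ0 Q).trans (ENNReal.ofReal_le_ofReal ?_)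
    have e1 : ρ ^ (2-2*ε) = m ^ (1-ε) := by
      rw [hρ, ← Real.rpow_mul hm0.le]
      norm_num
      ring_nf
    rw [e1]
    have h1 : (1:ℝ) ≤ 2-2*ε := by linarith
    calc 24 * kr * m ^ (1-ε) / (2-2*ε) ≤ 24 * kr * m ^ (1-ε) / 1 := by
          apply div_le_div_of_nonneg_left (by positivity) (by norm_num) h1
      _ = 24 * kr * m ^ (1-ε) := by ring
  -- outside part
  have hout : ∫⁻ p in D \ ball Q ρ, (edist p Q) ^ (-(2*ε)) ≤
      ENNReal.ofReal (m ^ (1-ε)) := by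
    have hptw : ∀ p ∈ D \ ball Q ρ, (edist p Q) ^ (-(2*ε)) ≤ ENNReal.ofReal (ρ ^ (-(2*ε))) := by
      intro p hp
      exact rpow_edist_le ha hρ0 (by simpa [mem_ball, not_lt, dist_comm] using hp.2)
    calc ∫⁻ p in D \ ball Q ρ, (edist p Q) ^ (-(2*ε))
        ≤ ∫⁻ _ in D \ ball Q ρ, ENNReal.ofReal (ρ ^ (-(2*ε))) :=
          setLIntegral_mono' (hDm.diff measurableSet_ball) hptw
      _ = ENNReal.ofReal (ρ ^ (-(2*ε))) * volume (D \ ball Q ρ) := setLIntegral_const _ _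
      _ ≤ ENNReal.ofReal (ρ ^ (-(2*ε))) * volume D := by gcongr; exact diff_subset
      _ = ENNReal.ofReal (ρ ^ (-(2*ε))) * ENNReal.ofReal m := by
          rw [hmdef, ENNReal.ofReal_toReal hDfin]
      _ = ENNReal.ofReal (ρ ^ (-(2*ε)) * m) := by
          rw [← ENNReal.ofReal_mul (by positivity)]
      _ = ENNReal.ofReal (m ^ (1-ε)) := by
          congr 1
          rw [hρ, ← Real.rpow_mul hm0.le]
          rw [show (1/2 : ℝ) * -(2*ε) = -ε by ring]
          rw [show m ^ (1-ε) = m ^ (-ε) * m ^ (1:ℝ) from by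
            rw [← Real.rpow_add hm0]; ring_nf]
          rw [Real.rpow_one]
  calc ∫⁻ p in D, (edist p Q) ^ (-(2*ε))
      ≤ ∫⁻ p in ball Q ρ ∪ (D \ ball Q ρ), (edist p Q) ^ (-(2*ε)) :=
        lintegral_mono_set (fun p hp => by
          by_cases h : p ∈ ball Q ρ <;> simp [h, hp])
    _ ≤ (∫⁻ p in ball Q ρ, (edist p Q) ^ (-(2*ε))) +
        ∫⁻ p in D \ ball Q ρ, (edist p Q) ^ (-(2*ε)) := lintegral_union_le _ _ _
    _ ≤ ENNReal.ofReal (24 * kr * m ^ (1-ε)) + ENNReal.ofReal (m ^ (1-ε)) := by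
        gcongr
    _ = ENNReal.ofReal ((24 * kr + 1) * m ^ (1-ε)) := by
        rw [← ENNReal.ofReal_add (by positivity) (by positivity)]
        ring_nf

lemma rpow_add_neg (x : ℝ≥0∞) {a b : ℝ} (ha : a < 0) (hb : b < 0) :
    x ^ (a+b) = x^a * x^b := by
  rcases eq_or_ne x 0 with rfl | hx0
  · rw [ENNReal.zero_rpow_of_neg (by linarith), ENNReal.zero_rpow_of_neg ha,
      ENNReal.zero_rpow_of_neg hb, ENNReal.top_mul_top]
  rcases eq_or_ne x ⊤ with rfl | hxt
  · rw [ENNReal.top_rpow_of_neg (by linarith), ENNReal.top_rpow_of_neg ha,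
      ENNReal.top_rpow_of_neg hb, mul_zero]
  · exact ENNReal.rpow_add _ _ hx0 hxt

lemma core {Ω : Set (EuclideanSpace ℝ (Fin 2))} (hΩm : MeasurableSet Ω)
    (hΩb : Bornology.IsBounded Ω) {M : ℝ} (hM0 : 0 ≤ M)
    {f : EuclideanSpace ℝ (Fin 2) → ℝ} (hfm : Measurable f)
    (hf : MemLp f 2 (volume.restrict Ω))
    {B : EuclideanSpace ℝ (Fin 2) → EuclideanSpace ℝ (Fin 2) → ℝ}
    (hBm : Measurable (Function.uncurry B)) (hB : ∀ p Q, |B p Q| ≤ M)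
    {v : EuclideanSpace ℝ (Fin 2) → ℝ} (hv : ∀ p, v p = ∫ Q in Ω, B p Q / dist p Q * f Q)
    {D : Set (EuclideanSpace ℝ (Fin 2))} (hD : D ⊆ Ω) (hDm : MeasurableSet D)
    {ε : ℝ} (hε : ε ∈ Set.Ioc (0:ℝ) (1/2)) :
    ∫ p in D, (v p)^2 ≤
      (12 * (volume (ball (0:E2) 1)).toReal * (Metric.diam Ω + 1)^2 *
        (24 * (volume (ball (0:E2) 1)).toReal + 1) * (M^2+1)) / ε *
        (volume D).toReal ^ (1-ε) * ∫ Q in Ω, (f Q)^2 := by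
  obtain ⟨hε0, hε12⟩ := hε
  set kr : ℝ := (volume (ball (0:E2) 1)).toReal with hkr
  have hkr0 : 0 ≤ kr := ENNReal.toReal_nonneg
  set d : ℝ := Metric.diam Ω + 1 with hd
  have hd1 : 1 ≤ d := by simp only [hd]; linarith [Metric.diam_nonneg (s := Ω)]
  have hd0 : 0 < d := by linarith
  set m : ℝ := (volume D).toReal with hm
  have hm0 : 0 ≤ m := ENNReal.toReal_nonneg
  have hΩfin : volume Ω ≠ ⊤ := hΩb.measure_lt_top.ne
  have hDfin : volume D ≠ ⊤ := ((measure_mono hD).trans_lt hΩb.measure_lt_top).ne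
  set Me : ℝ≥0∞ := ENNReal.ofReal M with hMe
  set F : E2 → ℝ≥0∞ := fun Q => ENNReal.ofReal |f Q| with hF
  have hFm : Measurable F := (hfm.abs).ennreal_ofReal
  set A : E2 → ℝ≥0∞ := fun p => ∫⁻ Q in Ω, (edist p Q)^(-(2-2*ε)) with hA
  set G : E2 → ℝ≥0∞ := fun p => ∫⁻ Q in Ω, (edist p Q)^(-(2*ε)) * (Me * F Q)^2 with hG
  set α : ℝ≥0∞ := ENNReal.ofReal (24 * kr * d^(2*ε) / (2*ε)) with hα
  set β : ℝ≥0∞ := ENNReal.ofReal ((24 * kr + 1) * m^(1-ε)) with hβ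
  set I : ℝ := ∫ Q in Ω, (f Q)^2 with hI
  have hI0 : 0 ≤ I := integral_nonneg (fun Q => sq_nonneg _)
  -- pointwise Cauchy-Schwarz
  have hvW : ∀ p, ENNReal.ofReal ((v p)^2) ≤ A p * G p := by
    intro p
    have hptw : ∀ Q, ENNReal.ofReal ‖B p Q / dist p Q * f Q‖ ≤ (edist p Q)⁻¹ * (Me * F Q) := by
      intro Q
      rcases eq_or_lt_of_le (dist_nonneg (x := p) (y := Q)) with h0 | h0
      · rw [← h0]; simp
      · have h1 : ‖B p Q / dist p Q * f Q‖ ≤ (dist p Q)⁻¹ * (M * |f Q|) := by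
          rw [Real.norm_eq_abs, abs_mul, abs_div, abs_of_nonneg dist_nonneg, div_eq_inv_mul,
            mul_assoc]
          exact mul_le_mul_of_nonneg_left
            (mul_le_mul_of_nonneg_right (hB p Q) (abs_nonneg _)) (by positivity)
        calc ENNReal.ofReal ‖B p Q / dist p Q * f Q‖
            ≤ ENNReal.ofReal ((dist p Q)⁻¹ * (M * |f Q|)) := ENNReal.ofReal_le_ofReal h1
          _ = (edist p Q)⁻¹ * (Me * F Q) := by
              rw [ENNReal.ofReal_mul (by positivity), ENNReal.ofReal_mul hM0, edist_dist,
                ← ENNReal.ofReal_inv_of_pos h0]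
    set W : ℝ≥0∞ := ∫⁻ Q in Ω, (edist p Q)⁻¹ * (Me * F Q) with hW
    have h1 : ENNReal.ofReal |v p| ≤ W := by
      rw [hv p]
      have hn := MeasureTheory.norm_integral_le_lintegral_norm
        (μ := volume.restrict Ω) (fun Q => B p Q / dist p Q * f Q)
      rw [Real.norm_eq_abs] at hn
      calc ENNReal.ofReal |∫ Q in Ω, B p Q / dist p Q * f Q|
          ≤ ENNReal.ofReal ((∫⁻ Q in Ω, ENNReal.ofReal ‖B p Q / dist p Q * f Q‖).toReal) :=
            ENNReal.ofReal_le_ofReal hn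
        _ ≤ ∫⁻ Q in Ω, ENNReal.ofReal ‖B p Q / dist p Q * f Q‖ := ENNReal.ofReal_toReal_le
        _ ≤ W := lintegral_mono hptw
    have hsplit : ∀ Q : E2, (edist p Q)⁻¹ * (Me * F Q) =
        ((edist p Q)^(-(1-ε))) * (((edist p Q)^(-ε)) * (Me * F Q)) := by
      intro Q
      rw [show edist p Q ^ (-(1-ε)) * (edist p Q ^ (-ε) * (Me * F Q))
            = (edist p Q ^ (-(1-ε)) * edist p Q ^ (-ε)) * (Me * F Q) from by ring,
        ← rpow_add_neg _ (by linarith) (by linarith), show (-(1-ε)) + (-ε) = (-1:ℝ) by ring,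
        ENNReal.rpow_neg_one]
    have conj : Real.HolderConjugate 2 2 := Real.HolderConjugate.two_two
    have hg1 : AEMeasurable (fun Q : E2 => (edist p Q)^(-(1-ε))) (volume.restrict Ω) := by
      fun_prop
    have hg2 : AEMeasurable (fun Q : E2 => ((edist p Q)^(-ε)) * (Me * F Q))
        (volume.restrict Ω) := by fun_prop
    have hold := ENNReal.lintegral_mul_le_Lp_mul_Lq (volume.restrict Ω) conj hg1 hg2
    have hWle : W ≤ (A p)^(1/2:ℝ) * (G p)^(1/2:ℝ) := by
      refine le_trans (le_of_eq (lintegral_congr hsplit)) (hold.trans (le_of_eq ?_))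
      congr 1
      · congr 1
        apply lintegral_congr; intro Q
        rw [← ENNReal.rpow_mul]
        congr 1
        ring
      · congr 1
        apply lintegral_congr; intro Q
        rw [ENNReal.mul_rpow_of_nonneg _ _ (by norm_num : (0:ℝ) ≤ 2), ← ENNReal.rpow_mul,
          ENNReal.rpow_two, show -ε * 2 = -(2*ε) by ring]
    calc ENNReal.ofReal ((v p)^2) = (ENNReal.ofReal |v p|)^2 := by
          rw [← sq_abs, ENNReal.ofReal_pow (abs_nonneg _)]
      _ ≤ ((A p)^(1/2:ℝ) * (G p)^(1/2:ℝ))^2 := by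
          exact pow_le_pow_left' (h1.trans hWle) 2
      _ = A p * G p := by
          rw [mul_pow, ← ENNReal.rpow_natCast ((A p)^(1/2:ℝ)) 2,
            ← ENNReal.rpow_natCast ((G p)^(1/2:ℝ)) 2, ← ENNReal.rpow_mul, ← ENNReal.rpow_mul]
          norm_num
  -- A is bounded on D
  have hAb : ∀ p ∈ D, A p ≤ α := by
    intro p hp
    refine estA ⟨hε0, hε12⟩ hd0 (fun Q hQ => ?_)
    rw [mem_ball]
    calc dist Q p ≤ Metric.diam Ω := Metric.dist_le_diam_of_mem hΩb hQ (hD hp)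
      _ < d := by simp only [hd]; linarith
  -- main lintegral chain
  have hkey : ∫⁻ p in D, ENNReal.ofReal ((v p)^2) ≤ α * (β * (Me^2 * ENNReal.ofReal I)) := by
    have hunc : Measurable (fun x : E2 × E2 => (edist x.1 x.2)^(-(2*ε)) * (Me * F x.2)^2) := by
      fun_prop
    calc ∫⁻ p in D, ENNReal.ofReal ((v p)^2)
        ≤ ∫⁻ p in D, A p * G p := lintegral_mono fun p => hvW p
      _ ≤ ∫⁻ p in D, α * G p :=
          setLIntegral_mono' hDm (fun p hp => mul_le_mul' (hAb p hp) le_rfl)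
      _ = α * ∫⁻ p in D, G p := lintegral_const_mul' _ _ ENNReal.ofReal_ne_top
      _ = α * ∫⁻ Q in Ω, (∫⁻ p in D, (edist p Q)^(-(2*ε))) * (Me * F Q)^2 := by
          congr 1
          rw [hG, lintegral_lintegral_swap hunc.aemeasurable]
          apply lintegral_congr; intro Q
          exact lintegral_mul_const _ (by fun_prop)
      _ ≤ α * ∫⁻ Q in Ω, β * (Me * F Q)^2 :=
          mul_le_mul' le_rfl (lintegral_mono fun Q =>
            mul_le_mul' (estB ⟨hε0, hε12⟩ hDm hDfin Q) le_rfl)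
      _ = α * (β * ∫⁻ Q in Ω, (Me * F Q)^2) := by
          rw [lintegral_const_mul' β _ ENNReal.ofReal_ne_top]
      _ = α * (β * (Me^2 * ∫⁻ Q in Ω, (F Q)^2)) := by
          congr 1
          rw [← lintegral_const_mul' (Me^2) _ (by simp [hMe])]
          congr 1
          apply lintegral_congr; intro Q; rw [mul_pow]
      _ = α * (β * (Me^2 * ENNReal.ofReal I)) := by
          congr 3
          rw [hI, ofReal_integral_eq_lintegral_ofReal hf.integrable_sq
            (Filter.Eventually.of_forall fun Q => sq_nonneg _)]
          apply lintegral_congr; intro Q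
          rw [← ENNReal.ofReal_pow (abs_nonneg _), sq_abs]
  -- convert to real integral
  have hvm : Measurable v := by
    have : v = fun p => ∫ Q in Ω, (fun x : E2 × E2 => B x.1 x.2 / dist x.1 x.2 * f x.2) (p, Q) := by
      funext p; exact hv p
    rw [this]
    exact (StronglyMeasurable.integral_prod_right'
      (((hBm.div (measurable_dist)).mul (hfm.comp measurable_snd)).stronglyMeasurable)).measurable
  have hRHS0 : (α * (β * (Me^2 * ENNReal.ofReal I))).toReal ≤
      (12 * kr * d^2 * (24 * kr + 1) * (M^2+1)) / ε * m ^ (1-ε) * I := by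
    have h1 : (α * (β * (Me^2 * ENNReal.ofReal I))) = ENNReal.ofReal
        ((24 * kr * d^(2*ε) / (2*ε)) * ((24 * kr + 1) * m^(1-ε)) * (M^2 * I)) := by
      rw [hα, hβ, hMe, ← ENNReal.ofReal_pow hM0, ← ENNReal.ofReal_mul (by positivity),
        ← ENNReal.ofReal_mul (by positivity), ← ENNReal.ofReal_mul (by positivity)]
      congr 1
      ring
    rw [h1, ENNReal.toReal_ofReal (by positivity)]
    have hde : d^(2*ε) ≤ d^2 := by
      rw [← Real.rpow_two]
      exact Real.rpow_le_rpow_of_exponent_le hd1 (by linarith)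
    have e : (12*kr*d^2*(24*kr+1)*(M^2+1))/ε * m^(1-ε) * I
        = (24*kr*d^2/(2*ε)) * ((24*kr+1)*m^(1-ε)) * ((M^2+1)*I) := by
      field_simp; ring
    rw [e]
    gcongr
    all_goals first
      | exact hI0
      | exact hde
      | positivity
      | linarith
  calc ∫ p in D, (v p)^2
      = (∫⁻ p in D, ENNReal.ofReal ((v p)^2)).toReal := by
        rw [integral_eq_lintegral_of_nonneg_ae (Filter.Eventually.of_forall fun p => sq_nonneg _)
          ((hvm.pow_const 2).aestronglyMeasurable)]
    _ ≤ (α * (β * (Me^2 * ENNReal.ofReal I))).toReal := by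
        apply ENNReal.toReal_mono _ hkey
        simp only [hα, hβ, hMe]
        exact ENNReal.mul_ne_top ENNReal.ofReal_ne_top (ENNReal.mul_ne_top ENNReal.ofReal_ne_top
          (ENNReal.mul_ne_top (by simp [ENNReal.pow_ne_top ENNReal.ofReal_ne_top])
            ENNReal.ofReal_ne_top))
    _ ≤ _ := hRHS0

end

open MeasureTheory Set

/-- Lemma 1: the singular integral operator with kernel `B(p,Q)/|p-Q|` maps `L²(Ω)` into
functions whose `L²` mass on a measurable set `D ⊆ Ω` is bounded by `(C/ε)|D|^{1-ε}‖f‖²`. -/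
theorem stmt_0 (Ω : Set (EuclideanSpace ℝ (Fin 2))) (hΩm : MeasurableSet Ω)
    (hΩb : Bornology.IsBounded Ω) (M : ℝ) :
    ∃ C : ℝ, 0 < C ∧
      ∀ (f : EuclideanSpace ℝ (Fin 2) → ℝ)
        (B : EuclideanSpace ℝ (Fin 2) → EuclideanSpace ℝ (Fin 2) → ℝ)
        (v : EuclideanSpace ℝ (Fin 2) → ℝ),
        MemLp f 2 (volume.restrict Ω) →
        Measurable (Function.uncurry B) →
        (∀ p Q, |B p Q| ≤ M) →
        (∀ p, v p = ∫ Q in Ω, B p Q / dist p Q * f Q) →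
        ∀ D : Set (EuclideanSpace ℝ (Fin 2)), D ⊆ Ω → MeasurableSet D →
        ∀ ε : ℝ, ε ∈ Set.Ioo (0:ℝ) 1 →
          ∫ p in D, (v p) ^ 2 ≤
            C / ε * (volume D).toReal ^ (1 - ε) * ∫ Q in Ω, (f Q) ^ 2 := by
  classical
  set kr : ℝ := (volume (Metric.ball (0:EuclideanSpace ℝ (Fin 2)) 1)).toReal with hkr
  have hkr0 : 0 < kr :=
    ENNReal.toReal_pos (measure_ball_pos volume 0 one_pos).ne' measure_ball_lt_top.ne
  set d : ℝ := Metric.diam Ω + 1 with hd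
  have hd1 : 1 ≤ d := by simp only [hd]; linarith [Metric.diam_nonneg (s := Ω)]
  have hd0 : 0 < d := by linarith
  set C0 : ℝ := 12 * kr * d^2 * (24*kr+1) * (M^2+1) with hC0def
  have hC0 : 0 < C0 := by
    have h2 : (0:ℝ) < d^2 := by positivity
    have h3 : (0:ℝ) < 24*kr+1 := by linarith
    have h4 : (0:ℝ) < M^2+1 := by positivity
    have h5 : (0:ℝ) < 12*kr := by linarith
    simp only [hC0def]
    positivity
  set S : ℝ := max 1 (volume Ω).toReal with hS
  have hS1 : 1 ≤ S := le_max_left _ _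
  have hΩfin : volume Ω ≠ ⊤ := hΩb.measure_lt_top.ne
  refine ⟨2*C0*S, by nlinarith, ?_⟩
  intro f B v hf hBm hB hv D hD hDm ε hε
  obtain ⟨hε0, hε1⟩ := hε
  have hM0 : 0 ≤ M := (abs_nonneg _).trans (hB 0 0)
  -- replace f by a measurable representative
  set g := hf.1.mk f with hg
  have hgm : Measurable g := hf.1.stronglyMeasurable_mk.measurable
  have hfg : f =ᵐ[volume.restrict Ω] g := hf.1.ae_eq_mk
  have hgLp : MemLp g 2 (volume.restrict Ω) := hf.ae_eq hfg
  have hv' : ∀ p, v p = ∫ Q in Ω, B p Q / dist p Q * g Q := fun p =>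
    (hv p).trans (integral_congr_ae (hfg.mono fun Q hQ => by beta_reduce; rw [hQ]))
  have hIeq : ∫ Q in Ω, (f Q)^2 = ∫ Q in Ω, (g Q)^2 :=
    integral_congr_ae (hfg.mono fun Q hQ => by beta_reduce; rw [hQ])
  set ε' : ℝ := min ε (1/2) with hε'def
  have hε' : ε' ∈ Set.Ioc (0:ℝ) (1/2) := ⟨lt_min hε0 (by norm_num), min_le_right _ _⟩
  have hε'0 : 0 < ε' := hε'.1
  have hε'ε : ε' ≤ ε := min_le_left _ _
  have hεhalf : ε/2 ≤ ε' := le_min (by linarith) (by linarith)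
  have hcore := core hΩm hΩb hM0 hgm hgLp hBm hB hv' hD hDm hε'
  set m : ℝ := (volume D).toReal with hm
  have hm0 : 0 ≤ m := ENNReal.toReal_nonneg
  set I : ℝ := ∫ Q in Ω, (g Q)^2 with hI
  have hI0 : 0 ≤ I := integral_nonneg (fun Q => sq_nonneg _)
  -- compare the two right hand sides
  have h1 : m ^ (1-ε') ≤ S * m ^ (1-ε) := by
    rcases eq_or_lt_of_le hm0 with h0 | h0
    · rw [← h0, Real.zero_rpow (by linarith), Real.zero_rpow (by linarith), mul_zero]
    · have e : m ^ (1-ε') = m ^ (ε-ε') * m ^ (1-ε) := by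
        rw [← Real.rpow_add h0]; congr 1; ring
      rw [e]
      apply mul_le_mul_of_nonneg_right _ (Real.rpow_nonneg hm0 _)
      rcases le_or_gt m 1 with hm1 | hm1
      · exact (Real.rpow_le_one hm0 hm1 (by linarith)).trans hS1
      · calc m ^ (ε-ε') ≤ m ^ (1:ℝ) :=
              Real.rpow_le_rpow_of_exponent_le hm1.le (by linarith)
          _ = m := Real.rpow_one m
          _ ≤ (volume Ω).toReal := ENNReal.toReal_mono hΩfin (measure_mono hD)
          _ ≤ S := le_max_right _ _
  have h2 : C0/ε' ≤ 2*C0/ε := by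
    calc C0/ε' ≤ C0/(ε/2) := by
          apply div_le_div_of_nonneg_left hC0.le (by linarith) hεhalf
      _ = 2*C0/ε := by field_simp
  calc ∫ p in D, (v p)^2 ≤ C0 / ε' * m ^ (1-ε') * I := hcore
    _ ≤ (2*C0/ε) * (S * m ^ (1-ε)) * I := by
        apply mul_le_mul_of_nonneg_right _ hI0
        apply mul_le_mul h2 h1 (Real.rpow_nonneg hm0 _) (by positivity)
    _ = 2*C0*S / ε * m ^ (1-ε) * I := by ring
    _ = 2*C0*S / ε * m ^ (1-ε) * ∫ Q in Ω, (f Q)^2 := by rw [hIeq]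
end

section
/- Let Ω ⊂ ℝ² be bounded with |Ω| < ∞, f ∈ L²(Ω), and v(p) = ∫∫_Ω B(p,Q)|p−Q|^{−1} f(Q) dQ with |B| ≤ M. Then for every q ≥ 2 there is a constant C (independent of q and f) such that ∫∫_Ω |v|^q dp ≤ C^q q^{q/2} ‖f‖^q_{L²(Ω)}; i.e., v lies in every L^q(Ω) with norm growing at most like C√q. -/
open MeasureTheory Set
open Metric ENNReal

local notation "E" => EuclideanSpace ℝ (Fin 2)

lemma aux_exp_bound {u : ℝ} (h0 : 0 < u) (h1 : u ≤ 1) : Real.exp (-u) ≤ 1 - u / 2 := by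
  have hprod : Real.exp (-u) * Real.exp u = 1 := by rw [← Real.exp_add]; simp
  nlinarith [Real.add_one_le_exp u, Real.exp_pos u, Real.exp_pos (-u), sq_nonneg u]

lemma aux_rpow_anti {x y : ℝ≥0∞} {s : ℝ} (hx : x ≤ y) (hs : 0 ≤ s) : y ^ (-s) ≤ x ^ (-s) := by
  rw [ENNReal.rpow_neg y, ENNReal.rpow_neg x]
  exact ENNReal.inv_le_inv.mpr (ENNReal.rpow_le_rpow hx hs)

lemma aux_factor (d g : ℝ≥0∞) (hd0 : d ≠ 0) (hdt : d ≠ ⊤) {q : ℝ} (hq : 2 ≤ q) :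
    ((d^(-1:ℝ) * g^2) ^ (1/q)) * ((d^(-(2-2/q)))^((1:ℝ)/2)) * ((g^2)^(1/2-1/q))
      = d^(-1:ℝ) * g := by
  have hq0 : (0:ℝ) < q := by linarith
  have h1q : (0:ℝ) ≤ 1/q := by positivity
  have h3 : (0:ℝ) ≤ 1/2 - 1/q := by
    rw [sub_nonneg]
    rw [div_le_div_iff₀ hq0 two_pos]
    linarith
  have hg2 : (g:ℝ≥0∞)^2 = g ^ ((2:ℕ):ℝ) := (ENNReal.rpow_natCast g 2).symm
  rw [ENNReal.mul_rpow_of_nonneg _ _ h1q, hg2,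
    ← ENNReal.rpow_mul d, ← ENNReal.rpow_mul g, ← ENNReal.rpow_mul d, ← ENNReal.rpow_mul g]
  rw [mul_assoc ((d ^ (-1 * (1/q))) ) _ _, mul_comm (g ^ (((2:ℕ):ℝ) * (1/q))) _, ← mul_assoc,
    mul_assoc, ← ENNReal.rpow_add _ _ hd0 hdt,
    ← ENNReal.rpow_add_of_nonneg _ _ (by positivity) (by positivity)]
  have e1 : (-1) * (1/q) + -(2 - 2/q) * ((1:ℝ)/2) = -1 := by
    field_simp
    ring
  have e2 : ((2:ℕ):ℝ) * (1/q) + ((2:ℕ):ℝ) * (1/2 - 1/q) = 1 := by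
    push_cast
    field_simp
    ring
  rw [e1, e2, ENNReal.rpow_one]

lemma riesz_bound (D : ℝ) (hD : 1 ≤ D) (p : E) {s : ℝ} (hs1 : 1 ≤ s) (hs2 : s < 2) :
    ∫⁻ Q in closedBall p D, (edist p Q) ^ (-s) ∂volume ≤
      ENNReal.ofReal (D * Real.exp 2 * (2 / (2 - s))) * volume (ball (0:E) 1) := by
  have hD0 : (0:ℝ) < D := lt_of_lt_of_le one_pos hD
  have hs0 : (0:ℝ) < s := lt_of_lt_of_le one_pos hs1
  set u : ℝ := 2 - s with hu
  have hu0 : 0 < u := by simp only [hu]; linarith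
  have hu1 : u ≤ 1 := by simp only [hu]; linarith
  set r : ℕ → ℝ := fun k => D * Real.exp (-(k:ℝ)) with hr
  have hrpos : ∀ k, 0 < r k := fun k => mul_pos hD0 (Real.exp_pos _)
  set A : ℕ → Set E := fun k => closedBall p (r k) \ closedBall p (r (k+1)) with hA
  have cover : closedBall p D \ {p} ⊆ ⋃ k, A k := by
    rintro Q ⟨hQD, hQp⟩
    have hd0 : 0 < dist Q p := dist_pos.mpr (fun h => hQp (by simp [h]))
    have hdD : dist Q p ≤ D := mem_closedBall.mp hQD
    have hP : ∃ k : ℕ, r (k+1) < dist Q p := by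
      obtain ⟨k, hk⟩ := exists_nat_gt (Real.log (D / dist Q p))
      refine ⟨k, ?_⟩
      have h1 : D / dist Q p < Real.exp ((k:ℝ)+1) := by
        calc D / dist Q p = Real.exp (Real.log (D / dist Q p)) :=
              (Real.exp_log (by positivity)).symm
          _ < Real.exp ((k:ℝ)+1) := Real.exp_lt_exp.mpr (by linarith)
      have : r (k+1) = D / Real.exp ((k:ℝ)+1) := by
        simp only [hr, Real.exp_neg, div_eq_mul_inv]
        push_cast; ring_nf
      rw [this, div_lt_iff₀ (Real.exp_pos _)]
      rw [div_lt_iff₀ hd0] at h1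
      linarith
    refine mem_iUnion.mpr ⟨Nat.find hP, ?_, ?_⟩
    · rw [mem_closedBall]
      rcases Nat.eq_zero_or_pos (Nat.find hP) with h0 | hpos
      · rw [h0]; simp only [hr]
        simpa using hdD
      · obtain ⟨m, hm⟩ := Nat.exists_eq_add_of_lt hpos
        have := Nat.find_min hP (m := m) (by omega)
        push_neg at this
        simpa [hm, Nat.zero_add] using this
    · rw [mem_closedBall]
      push_neg
      exact Nat.find_spec hP
  have step1 : ∫⁻ Q in closedBall p D, (edist p Q) ^ (-s) ∂volume ≤
      ∑' k, ∫⁻ Q in A k, (edist p Q) ^ (-s) ∂volume := by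
    calc ∫⁻ Q in closedBall p D, (edist p Q) ^ (-s) ∂volume
        ≤ ∫⁻ Q in {p} ∪ (closedBall p D \ {p}), (edist p Q) ^ (-s) ∂volume :=
          lintegral_mono_set (fun x hx => by
            by_cases h : x = p
            · exact Or.inl (by simp [h])
            · exact Or.inr ⟨hx, h⟩)
      _ ≤ (∫⁻ Q in {p}, (edist p Q) ^ (-s) ∂volume) +
            ∫⁻ Q in closedBall p D \ {p}, (edist p Q) ^ (-s) ∂volume :=
          lintegral_union_le _ _ _
      _ ≤ 0 + ∑' k, ∫⁻ Q in A k, (edist p Q) ^ (-s) ∂volume := by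
          gcongr
          · exact le_of_eq (setLIntegral_measure_zero _ _ (measure_singleton p))
          · exact le_trans (lintegral_mono_set cover) (lintegral_iUnion_le _ _)
      _ = _ := zero_add _
  have term_bound : ∀ k, ∫⁻ Q in A k, (edist p Q) ^ (-s) ∂volume ≤
      ENNReal.ofReal ((D * Real.exp 2) * (Real.exp (-u))^k) * volume (ball (0:E) 1) := by
    intro k
    have hb : ∫⁻ Q in A k, (edist p Q) ^ (-s) ∂volume ≤
        ENNReal.ofReal ((r (k+1)) ^ (-s)) * volume (A k) := by
      rw [← setLIntegral_const]
      refine setLIntegral_mono (by fun_prop) (fun Q hQ => ?_)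
      have : r (k+1) < dist Q p := by
        have := hQ.2
        rw [mem_closedBall] at this
        push_neg at this
        exact this
      rw [← ENNReal.ofReal_rpow_of_pos (hrpos (k+1))]
      refine aux_rpow_anti ?_ hs0.le
      rw [edist_dist, dist_comm]
      exact ENNReal.ofReal_le_ofReal this.le
    have hvol : volume (A k) ≤ ENNReal.ofReal ((r k)^2) * volume (ball (0:E) 1) := by
      refine le_trans (measure_mono (diff_subset)) ?_
      rw [Measure.addHaar_closedBall volume p (hrpos k).le]
      simp [finrank_euclideanSpace_fin]
    calc ∫⁻ Q in A k, (edist p Q) ^ (-s) ∂volume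
        ≤ ENNReal.ofReal ((r (k+1)) ^ (-s)) * (ENNReal.ofReal ((r k)^2) * volume (ball (0:E) 1)) := by
          refine le_trans hb ?_
          gcongr
      _ = ENNReal.ofReal ((r (k+1)) ^ (-s) * (r k)^2) * volume (ball (0:E) 1) := by
          rw [ENNReal.ofReal_mul (Real.rpow_nonneg (hrpos (k+1)).le _), mul_assoc]
      _ ≤ ENNReal.ofReal ((D * Real.exp 2) * (Real.exp (-u))^k) * volume (ball (0:E) 1) := by
          refine mul_le_mul_left (ENNReal.ofReal_le_ofReal ?_) _
          have cast1 : r (k+1) = D * Real.exp (-((k:ℝ)+1)) := by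
            simp only [hr]; push_cast; ring_nf
          have key : (r (k+1)) ^ (-s) * (r k)^2
              = D ^ u * Real.exp s * Real.exp (-(u * (k:ℝ))) := by
            rw [cast1]
            simp only [hr]
            rw [Real.mul_rpow hD0.le (Real.exp_pos _).le, mul_pow,
              ← Real.exp_mul, ← Real.exp_nat_mul]
            have hD2 : D ^ (2:ℕ) = D ^ ((2:ℕ):ℝ) := (Real.rpow_natCast D 2).symm
            rw [hD2]
            rw [mul_mul_mul_comm, ← Real.rpow_add hD0, ← Real.exp_add]
            have hue : -s + ((2:ℕ):ℝ) = u := by simp only [hu]; push_cast; ring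
            rw [hue, mul_assoc, ← Real.exp_add]
            congr 1
            push_cast
            simp only [hu]
            ring
          have rhs : (D * Real.exp 2) * (Real.exp (-u))^k
              = D * Real.exp 2 * Real.exp (-(u * (k:ℝ))) := by
            rw [← Real.exp_nat_mul]
            congr 2
            ring
          rw [key, rhs]
          have hDu : D ^ u ≤ D := by
            have := Real.rpow_le_rpow_of_exponent_le hD hu1
            rwa [Real.rpow_one] at this
          have h2 : Real.exp s ≤ Real.exp 2 := Real.exp_le_exp.mpr (by linarith)
          exact mul_le_mul_of_nonneg_right
            (mul_le_mul hDu h2 (Real.exp_pos _).le (by positivity))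
            (Real.exp_pos _).le
  calc ∫⁻ Q in closedBall p D, (edist p Q) ^ (-s) ∂volume
      ≤ ∑' k, ∫⁻ Q in A k, (edist p Q) ^ (-s) ∂volume := step1
    _ ≤ ∑' k : ℕ, ENNReal.ofReal ((D * Real.exp 2) * (Real.exp (-u))^k) * volume (ball (0:E) 1) :=
        ENNReal.tsum_le_tsum term_bound
    _ = (∑' k : ℕ, ENNReal.ofReal (D * Real.exp 2) * (ENNReal.ofReal (Real.exp (-u)))^k)
          * volume (ball (0:E) 1) := by
        rw [ENNReal.tsum_mul_right]
        congr 1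
        refine tsum_congr (fun k => ?_)
        rw [ENNReal.ofReal_mul (by positivity), ENNReal.ofReal_pow (Real.exp_pos _).le]
    _ = ENNReal.ofReal (D * Real.exp 2) * (1 - ENNReal.ofReal (Real.exp (-u)))⁻¹
          * volume (ball (0:E) 1) := by
        rw [ENNReal.tsum_mul_left, ENNReal.tsum_geometric]
    _ ≤ ENNReal.ofReal (D * Real.exp 2) * ENNReal.ofReal (2 / u) * volume (ball (0:E) 1) := by
        gcongr
        have hsub : ENNReal.ofReal (u/2) ≤ 1 - ENNReal.ofReal (Real.exp (-u)) := by
          have : ENNReal.ofReal (u/2) = ENNReal.ofReal 1 - ENNReal.ofReal (1 - u/2) := by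
            rw [← ENNReal.ofReal_sub _ (by linarith)]
            congr 1
            ring
          rw [this, ENNReal.ofReal_one]
          exact tsub_le_tsub_left (ENNReal.ofReal_le_ofReal (aux_exp_bound hu0 hu1)) 1
        calc (1 - ENNReal.ofReal (Real.exp (-u)))⁻¹ ≤ (ENNReal.ofReal (u/2))⁻¹ :=
              ENNReal.inv_le_inv.mpr hsub
          _ = ENNReal.ofReal (2/u) := by
              rw [← ENNReal.ofReal_inv_of_pos (by positivity)]
              congr 1
              rw [inv_div]
    _ = ENNReal.ofReal (D * Real.exp 2 * (2 / (2 - s))) * volume (ball (0:E) 1) := by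
        rw [← ENNReal.ofReal_mul (by positivity)]

lemma holder_step (μ : Measure (EuclideanSpace ℝ (Fin 2))) (G : EuclideanSpace ℝ (Fin 2) → ℝ≥0∞)
    (hG : Measurable G)
    (p : EuclideanSpace ℝ (Fin 2)) (hμp : μ {p} = 0) {q : ℝ} (hq : 2 ≤ q) :
    ∫⁻ Q, (edist p Q)^(-1:ℝ) * G Q ∂μ ≤
      (∫⁻ Q, (edist p Q)^(-1:ℝ) * (G Q)^2 ∂μ) ^ (1/q) *
      (∫⁻ Q, (edist p Q)^(-(2 - 2/q)) ∂μ) ^ ((1:ℝ)/2) *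
      (∫⁻ Q, (G Q)^2 ∂μ) ^ (1/2 - 1/q) := by
  have hq0 : (0:ℝ) < q := by linarith
  have h3 : (0:ℝ) ≤ 1/2 - 1/q := by
    rw [sub_nonneg, div_le_div_iff₀ hq0 two_pos]; linarith
  set F : Fin 3 → EuclideanSpace ℝ (Fin 2) → ℝ≥0∞ :=
    ![fun Q => (edist p Q)^(-1:ℝ) * (G Q)^2,
      fun Q => (edist p Q)^(-(2 - 2/q)),
      fun Q => (G Q)^2] with hF
  set θ : Fin 3 → ℝ := ![1/q, 1/2, 1/2 - 1/q] with hθ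
  have hedist : Measurable (fun Q => edist p Q) := by fun_prop
  have hm0 : AEMeasurable (fun Q => (edist p Q)^(-1:ℝ) * (G Q)^2) μ := by fun_prop
  have hm1 : AEMeasurable (fun Q => (edist p Q)^(-(2 - 2/q))) μ := by fun_prop
  have hm2 : AEMeasurable (fun Q => (G Q)^2) μ := by fun_prop
  have hmeas : ∀ i ∈ Finset.univ, AEMeasurable (F i) μ := by
    intro i _
    fin_cases i
    · exact hm0
    · exact hm1
    · exact hm2
  have hsum : ∑ i, θ i = 1 := by
    rw [Fin.sum_univ_three]
    simp only [hθ, Matrix.cons_val_zero, Matrix.cons_val_one, Matrix.head_cons,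
      Matrix.cons_val_two, Matrix.tail_cons]
    ring
  have hnn : ∀ i ∈ Finset.univ, 0 ≤ θ i := by
    intro i _
    fin_cases i
    · exact le_of_lt (one_div_pos.mpr hq0)
    · exact (by norm_num : (0:ℝ) ≤ 1/2)
    · exact h3
  have H := ENNReal.lintegral_prod_norm_pow_le Finset.univ hmeas hsum hnn
  have heq : ∫⁻ Q, (edist p Q)^(-1:ℝ) * G Q ∂μ = ∫⁻ a, ∏ i, F i a ^ θ i ∂μ := by
    refine lintegral_congr_ae ?_
    have hae : ∀ᵐ Q ∂μ, Q ≠ p := by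
      rw [ae_iff]
      convert hμp using 2
      ext Q
      simp
    filter_upwards [hae] with Q hQ
    rw [Fin.prod_univ_three]
    simp only [hF, hθ, Matrix.cons_val_zero, Matrix.cons_val_one, Matrix.head_cons,
      Matrix.cons_val_two, Matrix.tail_cons]
    have hd0 : edist p Q ≠ 0 := fun h => hQ (edist_eq_zero.mp h).symm
    exact (aux_factor _ _ hd0 (edist_ne_top p Q) hq).symm
  rw [heq]
  refine H.trans_eq ?_
  rw [Fin.prod_univ_three]
  simp only [hF, hθ, Matrix.cons_val_zero, Matrix.cons_val_one, Matrix.head_cons,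
    Matrix.cons_val_two, Matrix.tail_cons]

lemma aux_final {M K q L : ℝ} (hM0 : 0 ≤ M) (hK1 : 1 ≤ K) (hq : 2 ≤ q) (hL : 0 ≤ L) :
    M^q * (K*q)^((1/2)*q) * K * L^(q/2) ≤ ((|M|+1)*(K+1)^2)^q * q^(q/2) * L^(q/2) := by
  have hq0 : (0:ℝ) < q := by linarith
  refine mul_le_mul_of_nonneg_right ?_ (Real.rpow_nonneg hL _)
  have h1 : (K*q)^((1/2)*q) = K^(q/2) * q^(q/2) := by
    have he : (1/2)*q = q/2 := by ring
    rw [he, Real.mul_rpow (by linarith) hq0.le]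
  have e1 : M^q ≤ (|M|+1)^q :=
    Real.rpow_le_rpow hM0 ((le_abs_self M).trans (by linarith)) hq0.le
  have e2 : K^(q/2) ≤ (K+1)^q := by
    calc K^(q/2) ≤ (K+1)^(q/2) :=
          Real.rpow_le_rpow (by linarith) (by linarith) (by positivity)
      _ ≤ (K+1)^q := Real.rpow_le_rpow_of_exponent_le (by linarith) (by linarith)
  have e3 : K ≤ (K+1)^q := by
    calc K ≤ K+1 := by linarith
      _ = (K+1)^(1:ℝ) := (Real.rpow_one _).symm
      _ ≤ (K+1)^q := Real.rpow_le_rpow_of_exponent_le (by linarith) (by linarith)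
  have key : M^q * K^(q/2) * K ≤ (|M|+1)^q * (K+1)^q * (K+1)^q := by
    refine mul_le_mul (mul_le_mul e1 e2 (Real.rpow_nonneg (by linarith) _)
      (Real.rpow_nonneg (by positivity) _)) e3 (by linarith) ?_
    positivity
  have hC : ((|M|+1)*(K+1)^2)^q = (|M|+1)^q * (K+1)^q * (K+1)^q := by
    rw [Real.mul_rpow (by positivity) (by positivity), sq,
      Real.mul_rpow (by positivity) (by positivity)]
    ring
  calc M^q * (K*q)^((1/2)*q) * K = (M^q * K^(q/2) * K) * q^(q/2) := by rw [h1]; ring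
    _ ≤ ((|M|+1)^q * (K+1)^q * (K+1)^q) * q^(q/2) :=
        mul_le_mul_of_nonneg_right key (Real.rpow_nonneg hq0.le _)
    _ = ((|M|+1)*(K+1)^2)^q * q^(q/2) := by rw [hC]


/-- The potential `v(p) = ∫_Ω B(p,Q)|p-Q|⁻¹ f(Q) dQ` lies in every `L^q(Ω)` with
`∫_Ω |v|^q ≤ C^q q^{q/2} ‖f‖_{L²}^q`, i.e. with `L^q`-norm growing at most like `C√q`. -/
theorem stmt_2 (Ω : Set (EuclideanSpace ℝ (Fin 2))) (hΩm : MeasurableSet Ω)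
    (hΩb : Bornology.IsBounded Ω) (M : ℝ) :
    ∃ C : ℝ, 0 < C ∧
      ∀ (f : EuclideanSpace ℝ (Fin 2) → ℝ)
        (B : EuclideanSpace ℝ (Fin 2) → EuclideanSpace ℝ (Fin 2) → ℝ)
        (v : EuclideanSpace ℝ (Fin 2) → ℝ),
        MemLp f 2 (volume.restrict Ω) →
        Measurable (Function.uncurry B) →
        (∀ p Q, |B p Q| ≤ M) →
        (∀ p, v p = ∫ Q in Ω, B p Q / dist p Q * f Q) →
        ∀ q : ℝ, 2 ≤ q →
          ∫ p in Ω, |v p| ^ q ≤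
            C ^ q * q ^ (q / 2) * (Real.sqrt (∫ Q in Ω, (f Q) ^ 2)) ^ q := by
  obtain ⟨R, hR⟩ := hΩb.subset_closedBall 0
  set D : ℝ := max 1 (2 * R) with hD_def
  have hD1 : (1:ℝ) ≤ D := le_max_left _ _
  have hΩsub : ∀ p ∈ Ω, Ω ⊆ closedBall p D := by
    intro p hp Q hQ
    rw [mem_closedBall]
    have h1 : dist Q 0 ≤ R := hR hQ
    have h2 : dist p 0 ≤ R := hR hp
    calc dist Q p ≤ dist Q 0 + dist 0 p := dist_triangle _ _ _
      _ = dist Q 0 + dist p 0 := by rw [dist_comm 0 p]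
      _ ≤ 2 * R := by linarith
      _ ≤ D := le_max_right _ _
  set Vr : ℝ := (volume (ball (0 : EuclideanSpace ℝ (Fin 2)) 1)).toReal with hVr
  have hVr0 : 0 ≤ Vr := ENNReal.toReal_nonneg
  have hVtop : volume (ball (0 : EuclideanSpace ℝ (Fin 2)) 1) ≠ ⊤ := measure_ball_lt_top.ne
  have hVeq : volume (ball (0 : EuclideanSpace ℝ (Fin 2)) 1) = ENNReal.ofReal Vr :=
    (ENNReal.ofReal_toReal hVtop).symm
  set K : ℝ := D * Real.exp 2 * 2 * Vr + 1 with hK_def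
  have hKbase : 0 ≤ D * Real.exp 2 * 2 * Vr := by positivity
  have hK1 : 1 ≤ K := by rw [hK_def]; linarith
  have hK0 : 0 < K := by linarith
  have hries : ∀ p ∈ Ω, ∀ s : ℝ, 1 ≤ s → s < 2 →
      ∫⁻ Q in Ω, (edist p Q) ^ (-s) ∂volume ≤
        ENNReal.ofReal (D * Real.exp 2 * (2/(2-s)) * Vr) := by
    intro p hp s hs1 hs2
    have h2s : (0:ℝ) < 2 - s := by linarith
    calc ∫⁻ Q in Ω, (edist p Q)^(-s) ∂volume
        ≤ ∫⁻ Q in closedBall p D, (edist p Q)^(-s) ∂volume :=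
          lintegral_mono_set (hΩsub p hp)
      _ ≤ ENNReal.ofReal (D * Real.exp 2 * (2/(2-s))) *
            volume (ball (0 : EuclideanSpace ℝ (Fin 2)) 1) := riesz_bound D hD1 p hs1 hs2
      _ = ENNReal.ofReal (D * Real.exp 2 * (2/(2-s)) * Vr) := by
          rw [hVeq, ← ENNReal.ofReal_mul (by positivity)]
  refine ⟨(|M| + 1) * (K + 1)^2, by positivity, ?_⟩
  intro f B v hf hB hM hv q hq
  set μ := volume.restrict Ω with hμ_def
  have hq0 : (0:ℝ) < q := by linarith
  have hq2 : (0:ℝ) < q/2 := by linarith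
  have hM0 : 0 ≤ M := le_trans (abs_nonneg _) (hM 0 0)
  have hμp : ∀ p : EuclideanSpace ℝ (Fin 2), μ {p} = 0 := by
    intro p
    rw [hμ_def, Measure.restrict_apply' hΩm]
    exact measure_mono_null inter_subset_left (measure_singleton p)
  set f' := hf.1.mk f with hf'_def
  have hf'm : StronglyMeasurable f' := hf.1.stronglyMeasurable_mk
  have hff' : f =ᵐ[μ] f' := hf.1.ae_eq_mk
  set G : EuclideanSpace ℝ (Fin 2) → ℝ≥0∞ := fun Q => (‖f' Q‖₊ : ℝ≥0∞) with hG_def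
  have hGm : Measurable G := hf'm.measurable.enorm
  set Λ : ℝ≥0∞ := ∫⁻ Q, (G Q)^2 ∂μ with hΛ_def
  have hΛtop : Λ ≠ ⊤ := by
    have h := lintegral_rpow_enorm_lt_top_of_eLpNorm_lt_top two_ne_zero ENNReal.ofNat_ne_top hf.2
    rw [ENNReal.toReal_ofNat] at h
    have heq : ∫⁻ a, ((‖f a‖₊ : ℝ≥0∞)) ^ (2:ℝ) ∂μ = Λ := by
      rw [hΛ_def]
      refine lintegral_congr_ae ?_
      filter_upwards [hff'] with x hx
      rw [hx, ← ENNReal.rpow_natCast]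
      norm_num
      rfl
    rw [← heq]
    exact h.ne
  -- the basic pointwise bound on v
  set I : EuclideanSpace ℝ (Fin 2) → ℝ≥0∞ :=
    fun p => ∫⁻ Q, (edist p Q)^(-1:ℝ) * G Q ∂μ with hI_def
  have hveq : ∀ p, (‖v p‖₊ : ℝ≥0∞) ≤ ENNReal.ofReal M * I p := by
    intro p
    rw [hv p]
    refine le_trans (enorm_integral_le_lintegral_enorm _) ?_
    rw [hI_def, ← lintegral_const_mul' _ _ ENNReal.ofReal_ne_top]
    refine lintegral_mono_ae ?_
    filter_upwards [hff'] with Q hQ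
    by_cases hpQ : p = Q
    · simp [hpQ]
    · have hd : 0 < dist p Q := dist_pos.mpr hpQ
      have e1 : (‖B p Q / dist p Q * f Q‖₊ : ℝ≥0∞)
          = (‖B p Q‖₊ : ℝ≥0∞) * (‖(dist p Q)⁻¹‖₊ : ℝ≥0∞) * (‖f Q‖₊ : ℝ≥0∞) := by
        rw [div_eq_mul_inv, nnnorm_mul, nnnorm_mul, ENNReal.coe_mul, ENNReal.coe_mul]
      rw [enorm_eq_nnnorm, e1]
      have h2 : (‖B p Q‖₊ : ℝ≥0∞) ≤ ENNReal.ofReal M := by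
        rw [← enorm_eq_nnnorm, Real.enorm_eq_ofReal_abs]
        exact ENNReal.ofReal_le_ofReal (hM p Q)
      have h3 : (‖(dist p Q)⁻¹‖₊ : ℝ≥0∞) = (edist p Q)^(-1:ℝ) := by
        rw [← enorm_eq_nnnorm, Real.enorm_eq_ofReal_abs, abs_of_pos (by positivity),
          ENNReal.ofReal_inv_of_pos hd, ← edist_dist, ENNReal.rpow_neg_one]
      have h4 : (‖f Q‖₊ : ℝ≥0∞) = G Q := by rw [hG_def, hQ]
      rw [h3, h4, mul_assoc]
      exact mul_le_mul_left h2 _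
  -- RHS nonnegativity helper
  have hRHSnn : 0 ≤ ((|M| + 1) * (K + 1)^2) ^ q * q ^ (q / 2) *
      (Real.sqrt (∫ Q in Ω, (f Q) ^ 2)) ^ q :=
    mul_nonneg (mul_nonneg (Real.rpow_nonneg (by positivity) _)
      (Real.rpow_nonneg (by linarith) _)) (Real.rpow_nonneg (Real.sqrt_nonneg _) _)
  by_cases hL0 : Λ = 0
  · -- degenerate case : f = 0 a.e.
    have h2 : (fun Q => (G Q)^2) =ᵐ[μ] 0 := by
      rw [← lintegral_eq_zero_iff (hGm.pow_const 2)]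
      rw [← hΛ_def]
      exact hL0
    have hG0 : G =ᵐ[μ] 0 := by
      filter_upwards [h2] with Q hQ
      simpa using (pow_eq_zero_iff two_ne_zero).mp (by simpa using hQ)
    have hI0 : ∀ p, I p = 0 := by
      intro p
      have hz : (fun Q => (edist p Q)^(-1:ℝ) * G Q) =ᵐ[μ] 0 := by
        filter_upwards [hG0] with Q hQ
        simp only [Pi.zero_apply] at hQ ⊢
        rw [hQ, mul_zero]
      have hrfl : I p = ∫⁻ Q, (edist p Q)^(-1:ℝ) * G Q ∂μ := rfl
      rw [hrfl, lintegral_congr_ae hz]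
      simp
    have hv0 : ∀ p, v p = 0 := by
      intro p
      have h := hveq p
      rw [hI0 p, mul_zero, nonpos_iff_eq_zero] at h
      simpa using h
    simp only [hv0, abs_zero, Real.zero_rpow hq0.ne', integral_zero]
    exact hRHSnn
  -- main case
  set c₂ : ℝ≥0∞ := (ENNReal.ofReal (K * q)) ^ ((1:ℝ)/2) with hc₂_def
  set A : EuclideanSpace ℝ (Fin 2) → ℝ≥0∞ :=
    fun p => ∫⁻ Q, (edist p Q)^(-1:ℝ) * (G Q)^2 ∂μ with hA_def
  have hIbound : ∀ p ∈ Ω, I p ≤ (A p)^(1/q) * c₂ * Λ^(1/2 - 1/q) := by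
    intro p hp
    refine (holder_step μ G hGm p (hμp p) hq).trans ?_
    refine mul_le_mul' (mul_le_mul' le_rfl ?_) le_rfl
    refine ENNReal.rpow_le_rpow ?_ (by norm_num)
    have hs1 : (1:ℝ) ≤ 2 - 2/q := by
      have h1 : 2/q ≤ 1 := by rw [div_le_one hq0]; linarith
      linarith
    have hs2 : 2 - 2/q < 2 := by
      have h1 : 0 < 2/q := by positivity
      linarith
    refine (hries p hp _ hs1 hs2).trans (ENNReal.ofReal_le_ofReal ?_)
    have he : 2 - (2 - 2/q) = 2/q := by ring
    rw [he]
    have he2 : 2/(2/q) = q := by field_simp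
    rw [he2]
    have hb : 0 ≤ D * Real.exp 2 * Vr := by positivity
    calc D * Real.exp 2 * q * Vr = (D * Real.exp 2 * Vr) * q := by ring
      _ ≤ K * q := by
          refine mul_le_mul_of_nonneg_right ?_ hq0.le
          rw [hK_def]
          nlinarith [Real.exp_pos 2]
  have hGQtop : ∀ Q, (G Q)^2 ≠ ⊤ := fun Q => by
    rw [hG_def]
    exact ENNReal.pow_ne_top ENNReal.coe_ne_top
  have hA_swap : ∫⁻ p, A p ∂μ ≤ ENNReal.ofReal K * Λ := by
    have hker : AEMeasurable
        (Function.uncurry fun p Q => (edist p Q)^(-1:ℝ) * (G Q)^2) (μ.prod μ) := by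
      apply Measurable.aemeasurable
      show Measurable (fun z : (EuclideanSpace ℝ (Fin 2)) × (EuclideanSpace ℝ (Fin 2)) =>
        (edist z.1 z.2)^(-1:ℝ) * (G z.2)^2)
      fun_prop
    calc ∫⁻ p, A p ∂μ
        = ∫⁻ Q, ∫⁻ p, (edist p Q)^(-1:ℝ) * (G Q)^2 ∂μ ∂μ := lintegral_lintegral_swap hker
      _ = ∫⁻ Q, (∫⁻ p, (edist p Q)^(-1:ℝ) ∂μ) * (G Q)^2 ∂μ := by
          refine lintegral_congr (fun Q => ?_)
          rw [lintegral_mul_const' _ _ (hGQtop Q)]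
      _ ≤ ∫⁻ Q, ENNReal.ofReal K * (G Q)^2 ∂μ := by
          refine lintegral_mono_ae ?_
          filter_upwards [ae_restrict_mem hΩm] with Q hQ
          refine mul_le_mul_left ?_ _
          have hsymm : ∫⁻ p, (edist p Q)^(-1:ℝ) ∂μ = ∫⁻ p, (edist Q p)^(-(1:ℝ)) ∂μ :=
            lintegral_congr (fun p => by rw [edist_comm])
          rw [hsymm]
          refine (hries Q hQ 1 le_rfl one_lt_two).trans (ENNReal.ofReal_le_ofReal ?_)
          rw [hK_def]
          norm_num
      _ = ENNReal.ofReal K * Λ := by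
          rw [lintegral_const_mul' _ _ ENNReal.ofReal_ne_top, hΛ_def]
  have hcst_top : (ENNReal.ofReal M)^q * (c₂^q * Λ^((1/2 - 1/q)*q)) ≠ ⊤ := by
    refine ENNReal.mul_ne_top ?_ (ENNReal.mul_ne_top ?_ ?_)
    · exact ENNReal.rpow_ne_top_of_nonneg hq0.le ENNReal.ofReal_ne_top
    · exact ENNReal.rpow_ne_top_of_nonneg hq0.le
        (ENNReal.rpow_ne_top_of_nonneg (by norm_num) ENNReal.ofReal_ne_top)
    · refine ENNReal.rpow_ne_top_of_nonneg ?_ hΛtop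
      have h1 : 2/q ≤ 1 := by rw [div_le_one hq0]; linarith
      have h3 : (0:ℝ) ≤ 1/2 - 1/q := by
        rw [sub_nonneg, div_le_div_iff₀ hq0 two_pos]; linarith
      positivity
  have hmain : ∫⁻ p, ((‖v p‖₊ : ℝ≥0∞))^q ∂μ ≤
      (ENNReal.ofReal M)^q * (c₂^q * Λ^((1/2 - 1/q)*q)) * (ENNReal.ofReal K * Λ) := by
    calc ∫⁻ p, ((‖v p‖₊ : ℝ≥0∞))^q ∂μ
        ≤ ∫⁻ p, (ENNReal.ofReal M)^q * (c₂^q * Λ^((1/2 - 1/q)*q)) * A p ∂μ := by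
          refine lintegral_mono_ae ?_
          filter_upwards [ae_restrict_mem hΩm] with p hp
          calc ((‖v p‖₊ : ℝ≥0∞))^q ≤ (ENNReal.ofReal M * I p)^q :=
                ENNReal.rpow_le_rpow (hveq p) hq0.le
            _ ≤ (ENNReal.ofReal M * ((A p)^(1/q) * c₂ * Λ^(1/2 - 1/q)))^q :=
                ENNReal.rpow_le_rpow (mul_le_mul' le_rfl (hIbound p hp)) hq0.le
            _ = (ENNReal.ofReal M)^q * (c₂^q * Λ^((1/2 - 1/q)*q)) * A p := by
                rw [ENNReal.mul_rpow_of_nonneg _ _ hq0.le,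
                  ENNReal.mul_rpow_of_nonneg _ _ hq0.le,
                  ENNReal.mul_rpow_of_nonneg _ _ hq0.le,
                  ← ENNReal.rpow_mul (A p), one_div, inv_mul_cancel₀ hq0.ne',
                  ENNReal.rpow_one, ← ENNReal.rpow_mul Λ]
                ring
      _ = (ENNReal.ofReal M)^q * (c₂^q * Λ^((1/2 - 1/q)*q)) * ∫⁻ p, A p ∂μ :=
          lintegral_const_mul' _ _ hcst_top
      _ ≤ _ := mul_le_mul' le_rfl hA_swap
  have hmerge : (ENNReal.ofReal M)^q * (c₂^q * Λ^((1/2 - 1/q)*q)) * (ENNReal.ofReal K * Λ)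
      = (ENNReal.ofReal M)^q * c₂^q * ENNReal.ofReal K * Λ^(q/2) := by
    have hΛm : Λ^((1/2 - 1/q)*q) * Λ = Λ^(q/2) := by
      calc Λ^((1/2 - 1/q)*q) * Λ = Λ^((1/2 - 1/q)*q) * Λ^(1:ℝ) := by rw [ENNReal.rpow_one]
        _ = Λ^((1/2 - 1/q)*q + 1) := (ENNReal.rpow_add _ _ hL0 hΛtop).symm
        _ = Λ^(q/2) := by
            congr 1
            field_simp
            ring
    calc (ENNReal.ofReal M)^q * (c₂^q * Λ^((1/2 - 1/q)*q)) * (ENNReal.ofReal K * Λ)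
        = (ENNReal.ofReal M)^q * c₂^q * ENNReal.ofReal K * (Λ^((1/2 - 1/q)*q) * Λ) := by ring
      _ = _ := by rw [hΛm]
  rw [hmerge] at hmain
  have hRHS2top : (ENNReal.ofReal M)^q * c₂^q * ENNReal.ofReal K * Λ^(q/2) ≠ ⊤ := by
    refine ENNReal.mul_ne_top (ENNReal.mul_ne_top (ENNReal.mul_ne_top ?_ ?_) ?_) ?_
    · exact ENNReal.rpow_ne_top_of_nonneg hq0.le ENNReal.ofReal_ne_top
    · exact ENNReal.rpow_ne_top_of_nonneg hq0.le
        (ENNReal.rpow_ne_top_of_nonneg (by norm_num) ENNReal.ofReal_ne_top)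
    · exact ENNReal.ofReal_ne_top
    · exact ENNReal.rpow_ne_top_of_nonneg (by positivity) hΛtop
  have hfq : ∫ Q in Ω, (f Q)^2 = Λ.toReal := by
    have hnn : 0 ≤ᵐ[μ] fun Q => (f Q)^2 := Filter.Eventually.of_forall (fun Q => sq_nonneg _)
    have hms : AEStronglyMeasurable (fun Q => (f Q)^2) μ :=
      (hf.1.aemeasurable.pow_const 2).aestronglyMeasurable
    rw [integral_eq_lintegral_of_nonneg_ae hnn hms]
    congr 1
    rw [hΛ_def]
    refine lintegral_congr_ae ?_
    filter_upwards [hff'] with Q hQ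
    rw [hQ, ← sq_abs, ENNReal.ofReal_pow (abs_nonneg _), ← Real.enorm_eq_ofReal_abs]
    rfl
  rw [hfq]
  have hsqrt : (Real.sqrt Λ.toReal)^q = Λ.toReal^(q/2) := by
    rw [Real.sqrt_eq_rpow, ← Real.rpow_mul ENNReal.toReal_nonneg]
    congr 1
    ring
  rw [hsqrt]
  by_cases hint : Integrable (fun p => |v p|^q) μ
  · rw [integral_eq_lintegral_of_nonneg_ae
      (Filter.Eventually.of_forall (fun p => Real.rpow_nonneg (abs_nonneg _) q)) hint.1]
    have hlhs : ∫⁻ p, ENNReal.ofReal (|v p|^q) ∂μ = ∫⁻ p, ((‖v p‖₊ : ℝ≥0∞))^q ∂μ := by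
      refine lintegral_congr (fun p => ?_)
      rw [← enorm_eq_nnnorm, Real.enorm_eq_ofReal_abs, ENNReal.ofReal_rpow_of_nonneg (abs_nonneg _) hq0.le]
    rw [hlhs]
    refine le_trans (ENNReal.toReal_mono hRHS2top hmain) ?_
    have htr : ((ENNReal.ofReal M)^q * c₂^q * ENNReal.ofReal K * Λ^(q/2)).toReal
        = M^q * (K*q)^((1/2)*q) * K * Λ.toReal^(q/2) := by
      rw [ENNReal.toReal_mul, ENNReal.toReal_mul, ENNReal.toReal_mul]
      congr 1
      · congr 1
        · congr 1
          · rw [← ENNReal.toReal_rpow, ENNReal.toReal_ofReal hM0]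
          · rw [hc₂_def, ← ENNReal.rpow_mul, ← ENNReal.toReal_rpow,
              ENNReal.toReal_ofReal (by positivity)]
        · exact ENNReal.toReal_ofReal hK0.le
      · rw [← ENNReal.toReal_rpow]
    rw [htr]
    exact aux_final hM0 hK1 hq ENNReal.toReal_nonneg
  · rw [integral_undef hint]
    exact mul_nonneg (mul_nonneg (Real.rpow_nonneg (by positivity) _)
      (Real.rpow_nonneg (by linarith) _)) (Real.rpow_nonneg ENNReal.toReal_nonneg _)
end

section
/- Let K ⊂ ℝ² be a triangle with vertices p₁, p₂, p₃, and let u ∈ C²(K). For p ∈ K let L_i(p) be the barycentric coordinates and u_I the linear interpolant of u at the vertices. Setting M_i(t) = p_i + t(p − p_i), one has the exact representation u(p) − u_I(p) = −Σ_{i=1}^{3} L_i(p) ∫₀¹ t (d²/dt²) u(M_i(t)) dt. -/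
open Set intervalIntegral

lemma ibp_taylor (f : ℝ → ℝ) (hf : ContDiff ℝ 2 f) :
    f 1 - f 0 = deriv f 1 - ∫ t in (0:ℝ)..1, t * iteratedDeriv 2 f t := by
  have h2 : iteratedDeriv 2 f = deriv (deriv f) := by
    rw [iteratedDeriv_succ, iteratedDeriv_one]
  have hf1 : ContDiff ℝ 1 (deriv f) :=
    ((contDiff_succ_iff_deriv (n := 1)).mp (by exact_mod_cast hf)).2.2
  have hdf : Differentiable ℝ f := hf.differentiable (by norm_num)
  have hdf1 : Differentiable ℝ (deriv f) := hf1.differentiable (by norm_num)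
  have hcont2 : Continuous (deriv (deriv f)) :=
    ((contDiff_succ_iff_deriv (n := 0)).mp hf1).2.2.continuous
  have hibp : ∫ t in (0:ℝ)..1, t * deriv (deriv f) t
      = 1 * deriv f 1 - 0 * deriv f 0 - ∫ t in (0:ℝ)..1, 1 * deriv f t := by
    apply integral_mul_deriv_eq_deriv_mul
    · intro x _; exact hasDerivAt_id x
    · intro x _; exact (hdf1 x).hasDerivAt
    · exact intervalIntegrable_const
    · exact hcont2.intervalIntegrable 0 1
  have hftc : ∫ t in (0:ℝ)..1, deriv f t = f 1 - f 0 :=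
    integral_deriv_eq_sub (fun x _ => hdf x) (hf1.continuous.intervalIntegrable 0 1)
  rw [h2, hibp]
  simp only [one_mul, zero_mul, hftc]
  ring


/-- Exact Taylor representation of the linear interpolation error on a triangle:
`u(p) - u_I(p) = -∑ᵢ Lᵢ(p) ∫₀¹ t (d²/dt²) u(Mᵢ(t)) dt`, with `Mᵢ(t) = pᵢ + t(p - pᵢ)`. -/
theorem stmt_6 (p : Fin 3 → EuclideanSpace ℝ (Fin 2)) (hp : AffineIndependent ℝ p)
    (L : Fin 3 → (EuclideanSpace ℝ (Fin 2) →ᵃ[ℝ] ℝ))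
    (hL : ∀ i j, L i (p j) = if i = j then 1 else 0)
    (u : EuclideanSpace ℝ (Fin 2) → ℝ) (hu : ContDiff ℝ 2 u)
    (q : EuclideanSpace ℝ (Fin 2)) (hq : q ∈ convexHull ℝ (Set.range p)) :
    u q - ∑ i, L i q * u (p i) =
      -∑ i, L i q *
        ∫ t in (0:ℝ)..1, t * iteratedDeriv 2 (fun s => u (p i + s • (q - p i))) t := by
  classical
  have htop : affineSpan ℝ (Set.range p) = ⊤ := by
    rw [hp.affineSpan_eq_top_iff_card_eq_finrank_add_one]
    simp [finrank_euclideanSpace_fin]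
  let b : AffineBasis (Fin 3) ℝ (EuclideanSpace ℝ (Fin 2)) := ⟨p, hp, htop⟩
  set w : Fin 3 → ℝ := fun j => b.coord j q with hwdef
  have hsum : ∑ j, w j = 1 := b.sum_coord_apply_eq_one q
  have hqc : Finset.univ.affineCombination ℝ p w = q := b.affineCombination_coord_eq_self q
  have hLw : ∀ i, L i q = w i := by
    intro i
    have := Finset.univ.map_affineCombination p w hsum (L i)
    rw [hqc] at this
    rw [this, Finset.univ.affineCombination_eq_linear_combination _ _ hsum]
    simp [hL, mul_ite, mul_one, mul_zero]
  have key1 : ∑ i, L i q = 1 := by simp only [hLw]; exact hsum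
  have key2 : ∑ i, L i q • p i = q := by
    simp only [hLw]
    rw [← Finset.univ.affineCombination_eq_linear_combination _ _ hsum, hqc]
  -- the curves
  set f : Fin 3 → ℝ → ℝ := fun i s => u (p i + s • (q - p i)) with hfdef
  have hfc : ∀ i, ContDiff ℝ 2 (f i) := by
    intro i
    exact hu.comp (contDiff_const.add (contDiff_id.smul contDiff_const) : ContDiff ℝ 2 (fun s : ℝ => p i + s • (q - p i)))
  have hf1 : ∀ i, f i 1 = u q := by
    intro i; simp [hfdef, add_sub_cancel]
  have hf0 : ∀ i, f i 0 = u (p i) := by intro i; simp [hfdef]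
  have hderiv1 : ∀ i, deriv (f i) 1 = (fderiv ℝ u q) (q - p i) := by
    intro i
    have hline : HasDerivAt (fun s : ℝ => p i + s • (q - p i)) (q - p i) 1 := by
      simpa using ((hasDerivAt_id (1:ℝ)).smul_const (q - p i)).const_add (p i)
    have hF : HasFDerivAt u (fderiv ℝ u q) (p i + (1:ℝ) • (q - p i)) := by
      rw [one_smul, add_sub_cancel]
      exact (hu.differentiable (by norm_num) q).hasFDerivAt
    exact (hF.comp_hasDerivAt 1 hline).deriv
  have keyzero : ∑ i, L i q * deriv (f i) 1 = 0 := by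
    simp only [hderiv1]
    have : ∑ i, L i q * (fderiv ℝ u q) (q - p i)
        = (fderiv ℝ u q) (∑ i, L i q • (q - p i)) := by
      rw [map_sum]; simp [map_smul, smul_eq_mul]
    rw [this]
    have : (∑ i, L i q • (q - p i)) = (0 : EuclideanSpace ℝ (Fin 2)) := by
      simp only [smul_sub]
      rw [Finset.sum_sub_distrib, ← Finset.sum_smul, key1, one_smul, key2, sub_self]
    rw [this, map_zero]
  have expand : u q - ∑ i, L i q * u (p i) = ∑ i, L i q * (f i 1 - f i 0) := by
    simp only [mul_sub, hf1, hf0, Finset.sum_sub_distrib, ← Finset.sum_mul, key1, one_mul]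
  rw [expand]
  have : ∀ i, f i 1 - f i 0 = deriv (f i) 1
      - ∫ t in (0:ℝ)..1, t * iteratedDeriv 2 (f i) t := fun i => ibp_taylor (f i) (hfc i)
  simp only [this, mul_sub, Finset.sum_sub_distrib, keyzero, zero_sub]
  rfl
end
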